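/- arXiv:1809.06234 — 2 statements merged into one kernel-verified Lean document; each statement's English description precedes it below -/
import Mathlib

section
/- Let α₁, α₂ > 0, let Δt > 0, t_j = jΔt, and m ∈ ℕ with m ≥ 1. Then Δt · Σ_{j=1}^m t_{m-j+1}^{-1+α₁} t_j^{-1+α₂} ≤ C_{α₁,α₂} t_m^{-1+α₁+α₂}, where C_{α₁,α₂} depends only on α₁ and α₂. -/
open Real Finset

lemma step_ineq (b : ℝ) (hb0 : 0 < b) (hb1 : b ≤ 1) (m : ℕ) :
    b * ((m:ℝ)+1) ^ (b-1) ≤ ((m:ℝ)+1) ^ b - (m:ℝ) ^ b := by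
  have hM0 : (0:ℝ) < (m:ℝ)+1 := by positivity
  set M : ℝ := (m:ℝ) + 1 with hM
  have hmn : (0:ℝ) ≤ (m:ℝ) := Nat.cast_nonneg m
  have hs : (-1:ℝ) ≤ -(1/M) := by
    have : 1/M ≤ 1 := by rw [div_le_one hM0]; rw [hM]; linarith
    linarith
  have hber := rpow_one_add_le_one_add_mul_self hs hb0.le hb1
  have h1 : (1:ℝ) + -(1/M) = (m:ℝ)/M := by
    field_simp
    rw [hM]; ring
  rw [h1] at hber
  rw [Real.div_rpow hmn hM0.le] at hber
  have hMb : (0:ℝ) < M ^ b := rpow_pos_of_pos hM0 b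
  rw [div_le_iff₀ hMb] at hber
  have hE : (1 + b * -(1/M)) * M ^ b = M ^ b - b * M ^ (b-1) := by
    rw [Real.rpow_sub_one hM0.ne']
    field_simp
    ring
  rw [hE] at hber
  linarith

lemma sum_rpow_le (b : ℝ) (hb : 0 < b) (m : ℕ) (hm : 1 ≤ m) :
    ∑ j ∈ Icc 1 m, (j:ℝ) ^ (b-1) ≤ (1 + 1/b) * (m:ℝ) ^ b := by
  rcases le_or_gt b 1 with hb1 | hb1
  · have main : ∀ n : ℕ, 1 ≤ n → ∑ j ∈ Icc 1 n, (j:ℝ) ^ (b-1) ≤ (1/b) * (n:ℝ) ^ b := by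
      intro n hn
      induction n with
      | zero => omega
      | succ k ih =>
        rcases Nat.eq_or_lt_of_le hn with h | h
        · simp [← h]
          have h4 : b⁻¹ * b = 1 := inv_mul_cancel₀ hb.ne'
          nlinarith
        · have hk : 1 ≤ k := by omega
          rw [Finset.sum_Icc_succ_top (by omega)]
          have hstep := step_ineq b hb hb1 k
          have ih' := ih hk
          push_cast
          have h3 := mul_le_mul_of_nonneg_left hstep (le_of_lt (one_div_pos.mpr hb))
          have h4 : 1/b * (b * ((k:ℝ)+1)^(b-1)) = ((k:ℝ)+1)^(b-1) := by
            field_simp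
          linarith
    have h := main m hm
    have hpos : (0:ℝ) ≤ (m:ℝ)^b :=
      (rpow_pos_of_pos (by exact_mod_cast hm : (0:ℝ) < (m:ℝ)) b).le
    nlinarith
  · have hm0 : (0:ℝ) < (m:ℝ) := by exact_mod_cast hm
    have hbound : ∀ j ∈ Icc 1 m, (j:ℝ)^(b-1) ≤ (m:ℝ)^(b-1) := by
      intro j hj
      simp only [mem_Icc] at hj
      exact Real.rpow_le_rpow (by positivity) (by exact_mod_cast hj.2) (by linarith)
    calc ∑ j ∈ Icc 1 m, (j:ℝ)^(b-1) ≤ ∑ _j ∈ Icc 1 m, (m:ℝ)^(b-1) :=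
          Finset.sum_le_sum hbound
      _ = (m:ℝ) * (m:ℝ)^(b-1) := by
          rw [Finset.sum_const, Nat.card_Icc]
          simp
      _ = (m:ℝ)^b := by
          have h5 : (m:ℝ)^b = (m:ℝ)^(1:ℝ) * (m:ℝ)^(b-1) := by
            rw [← Real.rpow_add hm0]; ring_nf
          rw [h5, Real.rpow_one]
      _ ≤ (1+1/b) * (m:ℝ)^b := by
          nlinarith [rpow_pos_of_pos hm0 b, one_div_pos.mpr hb]

lemma half_bound (c : ℝ) (j m : ℕ) (hj1 : 1 ≤ j) (hjm : j ≤ m) (h2 : m ≤ 2*j) :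
    (j:ℝ) ^ (c-1) ≤ max 1 (2 ^ (1-c)) * (m:ℝ) ^ (c-1) := by
  have hj0 : (0:ℝ) < (j:ℝ) := by exact_mod_cast hj1
  have hm0 : (0:ℝ) < (m:ℝ) := by exact_mod_cast hj1.trans hjm
  rcases le_or_gt 1 c with hc | hc
  · calc (j:ℝ)^(c-1) ≤ (m:ℝ)^(c-1) :=
        Real.rpow_le_rpow hj0.le (by exact_mod_cast hjm) (by linarith)
      _ ≤ max 1 (2^(1-c)) * (m:ℝ)^(c-1) := by
        nlinarith [rpow_pos_of_pos hm0 (c-1), le_max_left (1:ℝ) (2^(1-c))]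
  · have hhalf : (m:ℝ)/2 ≤ (j:ℝ) := by
      have : (m:ℝ) ≤ 2*(j:ℝ) := by exact_mod_cast h2
      linarith
    have h1 : (j:ℝ)^(c-1) ≤ ((m:ℝ)/2)^(c-1) :=
      Real.rpow_le_rpow_of_nonpos (by positivity) hhalf (by linarith)
    have h2' : ((m:ℝ)/2)^(c-1) = 2^(1-c) * (m:ℝ)^(c-1) := by
      rw [Real.div_rpow hm0.le (by norm_num : (0:ℝ) ≤ 2)]
      rw [div_eq_mul_inv, ← Real.rpow_neg (by norm_num : (0:ℝ) ≤ 2)]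
      rw [mul_comm]
      norm_num
    calc (j:ℝ)^(c-1) ≤ 2^(1-c) * (m:ℝ)^(c-1) := by rw [← h2']; exact h1
      _ ≤ max 1 (2^(1-c)) * (m:ℝ)^(c-1) := by
        nlinarith [rpow_pos_of_pos hm0 (c-1), le_max_right (1:ℝ) (2^(1-c))]

lemma reindex_sum (m : ℕ) (f : ℕ → ℝ) :
    ∑ j ∈ Icc 1 m, f (m - j + 1) = ∑ j ∈ Icc 1 m, f j := by
  apply Finset.sum_nbij' (fun j => m - j + 1) (fun j => m - j + 1)
  · intro a ha; simp only [mem_Icc] at *; omega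
  · intro a ha; simp only [mem_Icc] at *; omega
  · intro a ha; simp only [mem_Icc] at ha; omega
  · intro a ha; simp only [mem_Icc] at ha; omega
  · intro a _; rfl

lemma discrete_beta (a b : ℝ) (ha : 0 < a) (hb : 0 < b) (m : ℕ) (hm : 1 ≤ m) :
    ∑ j ∈ Icc 1 m, ((m - j + 1 : ℕ):ℝ)^(a-1) * ((j:ℕ):ℝ)^(b-1)
      ≤ (max 1 (2^(1-a)) * (1+1/b) + max 1 (2^(1-b)) * (1+1/a)) * (m:ℝ)^(a+b-1) := by
  have hm0 : (0:ℝ) < (m:ℝ) := by exact_mod_cast hm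
  set c₁ : ℝ := max 1 (2^(1-a)) with hc₁
  set c₂ : ℝ := max 1 (2^(1-b)) with hc₂
  have hc₁0 : (0:ℝ) < c₁ := lt_of_lt_of_le one_pos (le_max_left _ _)
  have hc₂0 : (0:ℝ) < c₂ := lt_of_lt_of_le one_pos (le_max_left _ _)
  have pointwise : ∀ j ∈ Icc 1 m,
      ((m - j + 1 : ℕ):ℝ)^(a-1) * ((j:ℕ):ℝ)^(b-1)
        ≤ c₁ * (m:ℝ)^(a-1) * ((j:ℕ):ℝ)^(b-1)
          + c₂ * (m:ℝ)^(b-1) * ((m - j + 1 : ℕ):ℝ)^(a-1) := by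
    intro j hj
    simp only [mem_Icc] at hj
    obtain ⟨hj1, hjm⟩ := hj
    have hjp : (0:ℝ) < (j:ℝ) := by exact_mod_cast hj1
    have hip : (0:ℝ) < ((m - j + 1 : ℕ):ℝ) := by positivity
    rcases le_or_gt (2*j) m with hcase | hcase
    · have h1 : ((m - j + 1 : ℕ):ℝ)^(a-1) ≤ c₁ * (m:ℝ)^(a-1) :=
        half_bound a (m - j + 1) m (by omega) (by omega) (by omega)
      have h2 : ((m - j + 1 : ℕ):ℝ)^(a-1) * ((j:ℕ):ℝ)^(b-1)
          ≤ c₁ * (m:ℝ)^(a-1) * ((j:ℕ):ℝ)^(b-1) :=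
        mul_le_mul_of_nonneg_right h1 (Real.rpow_nonneg hjp.le _)
      have h3 : (0:ℝ) ≤ c₂ * (m:ℝ)^(b-1) * ((m - j + 1 : ℕ):ℝ)^(a-1) := by positivity
      linarith
    · have h1 : ((j:ℕ):ℝ)^(b-1) ≤ c₂ * (m:ℝ)^(b-1) :=
        half_bound b j m hj1 hjm (by omega)
      have h2 : ((m - j + 1 : ℕ):ℝ)^(a-1) * ((j:ℕ):ℝ)^(b-1)
          ≤ ((m - j + 1 : ℕ):ℝ)^(a-1) * (c₂ * (m:ℝ)^(b-1)) :=
        mul_le_mul_of_nonneg_left h1 (Real.rpow_nonneg hip.le _)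
      have h3 : (0:ℝ) ≤ c₁ * (m:ℝ)^(a-1) * ((j:ℕ):ℝ)^(b-1) := by positivity
      nlinarith
  have hsplit := Finset.sum_le_sum pointwise
  rw [Finset.sum_add_distrib] at hsplit
  have e1 : ∑ j ∈ Icc 1 m, c₁ * (m:ℝ)^(a-1) * ((j:ℕ):ℝ)^(b-1)
      = c₁ * (m:ℝ)^(a-1) * ∑ j ∈ Icc 1 m, ((j:ℕ):ℝ)^(b-1) := by
    rw [Finset.mul_sum]
  have e2 : ∑ j ∈ Icc 1 m, c₂ * (m:ℝ)^(b-1) * ((m - j + 1 : ℕ):ℝ)^(a-1)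
      = c₂ * (m:ℝ)^(b-1) * ∑ j ∈ Icc 1 m, ((j:ℕ):ℝ)^(a-1) := by
    rw [reindex_sum m (fun i => c₂ * (m:ℝ)^(b-1) * ((i:ℕ):ℝ)^(a-1)), Finset.mul_sum]
  rw [e1, e2] at hsplit
  have s1 := sum_rpow_le b hb m hm
  have s2 := sum_rpow_le a ha m hm
  have t1 : c₁ * (m:ℝ)^(a-1) * ∑ j ∈ Icc 1 m, ((j:ℕ):ℝ)^(b-1)
      ≤ c₁ * (1+1/b) * (m:ℝ)^(a+b-1) := by
    have h := mul_le_mul_of_nonneg_left s1 (by positivity : (0:ℝ) ≤ c₁ * (m:ℝ)^(a-1))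
    have e : c₁ * (m:ℝ)^(a-1) * ((1+1/b) * (m:ℝ)^b) = c₁ * (1+1/b) * (m:ℝ)^(a+b-1) := by
      rw [show a+b-1 = (a-1)+b by ring, Real.rpow_add hm0]
      ring
    linarith [h, e.le, e.ge]
  have t2 : c₂ * (m:ℝ)^(b-1) * ∑ j ∈ Icc 1 m, ((j:ℕ):ℝ)^(a-1)
      ≤ c₂ * (1+1/a) * (m:ℝ)^(a+b-1) := by
    have h := mul_le_mul_of_nonneg_left s2 (by positivity : (0:ℝ) ≤ c₂ * (m:ℝ)^(b-1))
    have e : c₂ * (m:ℝ)^(b-1) * ((1+1/a) * (m:ℝ)^a) = c₂ * (1+1/a) * (m:ℝ)^(a+b-1) := by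
      rw [show a+b-1 = (b-1)+a by ring, Real.rpow_add hm0]
      ring
    linarith [h, e.le, e.ge]
  calc ∑ j ∈ Icc 1 m, ((m - j + 1 : ℕ):ℝ)^(a-1) * ((j:ℕ):ℝ)^(b-1)
      ≤ c₁ * (m:ℝ)^(a-1) * (∑ j ∈ Icc 1 m, ((j:ℕ):ℝ)^(b-1))
        + c₂ * (m:ℝ)^(b-1) * (∑ j ∈ Icc 1 m, ((j:ℕ):ℝ)^(a-1)) := hsplit
    _ ≤ c₁ * (1+1/b) * (m:ℝ)^(a+b-1) + c₂ * (1+1/a) * (m:ℝ)^(a+b-1) := by linarith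
    _ = (c₁ * (1+1/b) + c₂ * (1+1/a)) * (m:ℝ)^(a+b-1) := by ring

theorem stmt_4 (α₁ α₂ : ℝ) (h1 : 0 < α₁) (h2 : 0 < α₂) :
    ∃ C : ℝ, 0 < C ∧ ∀ (Δt : ℝ) (m : ℕ), 0 < Δt → 1 ≤ m →
      Δt * ∑ j ∈ Finset.Icc 1 m,
        (((m - j + 1 : ℕ) : ℝ) * Δt) ^ (-1 + α₁) * (((j : ℕ) : ℝ) * Δt) ^ (-1 + α₂)
      ≤ C * ((m : ℝ) * Δt) ^ (-1 + α₁ + α₂) := by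
  refine ⟨max 1 (2^(1-α₁)) * (1+1/α₂) + max 1 (2^(1-α₂)) * (1+1/α₁), by positivity, ?_⟩
  intro Δt m hΔ hm
  set C : ℝ := max 1 (2^(1-α₁)) * (1+1/α₂) + max 1 (2^(1-α₂)) * (1+1/α₁) with hC
  have hm0 : (0:ℝ) < (m:ℝ) := by exact_mod_cast hm
  have hterm : ∀ j ∈ Finset.Icc 1 m,
      (((m - j + 1 : ℕ) : ℝ) * Δt) ^ (-1 + α₁) * (((j : ℕ) : ℝ) * Δt) ^ (-1 + α₂)
        = (((m - j + 1 : ℕ):ℝ)^(α₁-1) * ((j:ℕ):ℝ)^(α₂-1)) * Δt^(α₁+α₂-2) := by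
    intro j _
    rw [show (-1 + α₁) = α₁ - 1 by ring, show (-1 + α₂) = α₂ - 1 by ring,
      Real.mul_rpow (Nat.cast_nonneg _) hΔ.le, Real.mul_rpow (Nat.cast_nonneg _) hΔ.le,
      show α₁+α₂-2 = (α₁-1)+(α₂-1) by ring, Real.rpow_add hΔ]
    ring
  rw [Finset.sum_congr rfl hterm, ← Finset.sum_mul,
    Real.mul_rpow (Nat.cast_nonneg m) hΔ.le]
  have hS : ∑ j ∈ Finset.Icc 1 m, ((m - j + 1 : ℕ):ℝ)^(α₁-1) * ((j:ℕ):ℝ)^(α₂-1)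
      ≤ C * (m:ℝ)^(-1+α₁+α₂) := by
    rw [show (-1+α₁+α₂) = α₁+α₂-1 by ring]
    exact discrete_beta α₁ α₂ h1 h2 m hm
  have eΔ : Δt * Δt^(α₁+α₂-2) = Δt^(-1+α₁+α₂) := by
    rw [show (-1+α₁+α₂) = (α₁+α₂-2)+1 by ring, Real.rpow_add_one hΔ.ne']
    ring
  calc Δt * ((∑ j ∈ Finset.Icc 1 m, ((m - j + 1 : ℕ):ℝ)^(α₁-1) * ((j:ℕ):ℝ)^(α₂-1)) * Δt^(α₁+α₂-2))
      = (∑ j ∈ Finset.Icc 1 m, ((m - j + 1 : ℕ):ℝ)^(α₁-1) * ((j:ℕ):ℝ)^(α₂-1))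
          * (Δt * Δt^(α₁+α₂-2)) := by ring
    _ = (∑ j ∈ Finset.Icc 1 m, ((m - j + 1 : ℕ):ℝ)^(α₁-1) * ((j:ℕ):ℝ)^(α₂-1))
          * Δt^(-1+α₁+α₂) := by rw [eΔ]
    _ ≤ (C * (m:ℝ)^(-1+α₁+α₂)) * Δt^(-1+α₁+α₂) :=
        mul_le_mul_of_nonneg_right hS (Real.rpow_nonneg hΔ.le _)
    _ = C * ((m:ℝ)^(-1+α₁+α₂) * Δt^(-1+α₁+α₂)) := by ring
end

section
/- Let A be a self-adjoint negative-definite operator on a finite-dimensional inner product space, with eigenvalues -λ₁, …, -λ_N where λ_n > 0, and let ρ ∈ [0,1]. Then for 0 ≤ τ₁ ≤ τ₂, ∫_{τ₁}^{τ₂} ‖(-A)^{ρ/2} e^{(τ₂-r)A} x‖² dr ≤ C (τ₂-τ₁)^{1-ρ} ‖x‖² for all x, where C depends only on ρ. -/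
open Real Finset intervalIntegral RealInnerProductSpace

/-- The operator on a finite-dimensional inner product space acting diagonally
with coefficients `g n` in the orthonormal basis `b`. For a self-adjoint
negative-definite `A` with eigenpairs `(-lam n, b n)`, the operator
`(-A)^{ρ/2} e^{tA}` acts spectrally as `specOp b (fun n => lam n ^ (ρ/2) * exp (-t * lam n))`. -/
noncomputable def specOp {N : ℕ} {E : Type*} [NormedAddCommGroup E]
    [InnerProductSpace ℝ E] (b : OrthonormalBasis (Fin N) ℝ E)
    (g : Fin N → ℝ) (x : E) : E :=
  ∑ n, (g n * ⟪b n, x⟫) • b n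


-- integral of exp(-2λ(τ₂-r)) over [τ₁,τ₂]
lemma exp_integral (l τ₁ τ₂ : ℝ) (hl : 0 < l) :
    (∫ r in τ₁..τ₂, Real.exp (-(τ₂ - r) * (2 * l)))
      = (1 - Real.exp (-(τ₂ - τ₁) * (2 * l))) / (2 * l) := by
  have hd : ∀ r ∈ Set.uIcc τ₁ τ₂, HasDerivAt
      (fun r => Real.exp (-(τ₂ - r) * (2 * l)) / (2 * l))
      (Real.exp (-(τ₂ - r) * (2 * l))) r := by
    intro r _
    have h1 : HasDerivAt (fun r : ℝ => -(τ₂ - r) * (2 * l)) (2 * l) r := by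
      have := ((hasDerivAt_id r).const_sub τ₂).neg.mul_const (2 * l)
      simpa using this
    have h2 := (h1.exp).div_const (2 * l)
    have hne : 2 * l ≠ 0 := by positivity
    simpa [mul_div_assoc, mul_div_cancel_right₀, hne] using h2
  have hcont : IntervalIntegrable (fun r => Real.exp (-(τ₂ - r) * (2 * l)))
      MeasureTheory.volume τ₁ τ₂ := (by continuity : Continuous fun r : ℝ =>
        Real.exp (-(τ₂ - r) * (2 * l))).intervalIntegrable _ _
  rw [intervalIntegral.integral_eq_sub_of_hasDerivAt hd hcont]
  simp [sub_div]

lemma one_sub_exp_le (s ρ : ℝ) (hs : 0 ≤ s) (hρ0 : 0 ≤ ρ) (hρ1 : ρ ≤ 1) :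
    1 - Real.exp (-s) ≤ 2 * (s / 2) ^ (1 - ρ) := by
  rcases eq_or_lt_of_le hs with rfl | hs
  · simp only [neg_zero, Real.exp_zero, sub_self]
    positivity
  rcases le_or_gt s 1 with h | h
  · have h1 : 1 - Real.exp (-s) ≤ s := by
      nlinarith [Real.add_one_le_exp (-s)]
    have h2 : s / 2 ≤ (s / 2) ^ (1 - ρ) := by
      calc s / 2 = (s / 2) ^ (1 : ℝ) := by rw [Real.rpow_one]
      _ ≤ (s / 2) ^ (1 - ρ) := by
        apply Real.rpow_le_rpow_of_exponent_ge (by positivity) (by linarith) (by linarith)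
    nlinarith
  · have h1 : 1 - Real.exp (-s) ≤ 1 := by
      have := Real.exp_pos (-s); linarith
    have h2 : ((1:ℝ) / 2) ^ (1 - ρ) ≤ (s / 2) ^ (1 - ρ) :=
      Real.rpow_le_rpow (by norm_num) (by linarith) (by linarith)
    have h3 : (1:ℝ) / 2 ≤ ((1:ℝ)/2) ^ (1 - ρ) := by
      calc (1:ℝ)/2 = ((1:ℝ)/2) ^ (1:ℝ) := by rw [Real.rpow_one]
      _ ≤ ((1:ℝ)/2) ^ (1 - ρ) := by
        apply Real.rpow_le_rpow_of_exponent_ge (by norm_num) (by norm_num) (by linarith)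
    linarith

-- key spectral estimate
lemma key (ρ l T : ℝ) (hρ0 : 0 ≤ ρ) (hρ1 : ρ ≤ 1) (hl : 0 < l) (hT : 0 ≤ T) :
    l ^ ρ * ((1 - Real.exp (-T * (2 * l))) / (2 * l)) ≤ T ^ (1 - ρ) := by
  have h := one_sub_exp_le (2 * l * T) ρ (by positivity) hρ0 hρ1
  have hs : -T * (2 * l) = -(2 * l * T) := by ring
  rw [hs]
  have h2 : (2 * l * T) / 2 = l * T := by ring
  rw [h2] at h
  have h3 : (l * T) ^ (1 - ρ) = l ^ (1 - ρ) * T ^ (1 - ρ) :=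
    Real.mul_rpow hl.le hT
  have h4 : l ^ ρ * (1 - Real.exp (-(2 * l * T))) ≤ 2 * l * T ^ (1 - ρ) := by
    calc l ^ ρ * (1 - Real.exp (-(2 * l * T)))
        ≤ l ^ ρ * (2 * (l ^ (1 - ρ) * T ^ (1 - ρ))) := by
          apply mul_le_mul_of_nonneg_left _ (Real.rpow_nonneg hl.le ρ)
          rw [← h3]; exact h
      _ = 2 * (l ^ ρ * l ^ (1 - ρ)) * T ^ (1 - ρ) := by ring
      _ = 2 * l * T ^ (1 - ρ) := by
          rw [← Real.rpow_add hl]; norm_num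
  have heq : l ^ ρ * ((1 - Real.exp (-(2 * l * T))) / (2 * l))
      = (l ^ ρ * (1 - Real.exp (-(2 * l * T)))) / (2 * l) := by ring
  rw [heq, div_le_iff₀ (by positivity : (0:ℝ) < 2 * l)]
  nlinarith [h4]

theorem stmt_10 (ρ : ℝ) (hρ0 : 0 ≤ ρ) (hρ1 : ρ ≤ 1) :
    ∃ C : ℝ, 0 < C ∧ ∀ (N : ℕ) (E : Type) (_ : NormedAddCommGroup E)
      (_ : InnerProductSpace ℝ E) (b : OrthonormalBasis (Fin N) ℝ E)
      (lam : Fin N → ℝ), (∀ n, 0 < lam n) → ∀ (τ₁ τ₂ : ℝ), 0 ≤ τ₁ → τ₁ ≤ τ₂ →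
      ∀ x : E,
        (∫ r in τ₁..τ₂,
            ‖specOp b (fun n => lam n ^ (ρ / 2) * Real.exp (-(τ₂ - r) * lam n)) x‖ ^ 2)
          ≤ C * (τ₂ - τ₁) ^ (1 - ρ) * ‖x‖ ^ 2 := by
  refine ⟨1, one_pos, fun N E _ _ b lam hlam τ₁ τ₂ hτ₁ hτ x => ?_⟩
  set a : Fin N → ℝ := fun n => ⟪b n, x⟫ with ha
  -- pointwise norm expansion
  have hnorm : ∀ r : ℝ,
      ‖specOp b (fun n => lam n ^ (ρ / 2) * Real.exp (-(τ₂ - r) * lam n)) x‖ ^ 2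
        = ∑ n, (lam n ^ (ρ / 2) * Real.exp (-(τ₂ - r) * lam n) * a n) ^ 2 := by
    intro r
    rw [← real_inner_self_eq_norm_sq]
    unfold specOp
    rw [b.orthonormal.inner_sum]
    simp [pow_two, starRingEnd_apply, ha]
  have hcont : ∀ n : Fin N, Continuous fun r : ℝ =>
      (lam n ^ (ρ / 2) * Real.exp (-(τ₂ - r) * lam n) * a n) ^ 2 := by
    intro n; continuity
  calc (∫ r in τ₁..τ₂,
        ‖specOp b (fun n => lam n ^ (ρ / 2) * Real.exp (-(τ₂ - r) * lam n)) x‖ ^ 2)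
      = ∫ r in τ₁..τ₂, ∑ n, (lam n ^ (ρ / 2) * Real.exp (-(τ₂ - r) * lam n) * a n) ^ 2 := by
        exact intervalIntegral.integral_congr fun r _ => hnorm r
    _ = ∑ n, ∫ r in τ₁..τ₂, (lam n ^ (ρ / 2) * Real.exp (-(τ₂ - r) * lam n) * a n) ^ 2 :=
        intervalIntegral.integral_finset_sum fun n _ =>
          (hcont n).intervalIntegrable _ _
    _ ≤ ∑ n, (τ₂ - τ₁) ^ (1 - ρ) * a n ^ 2 := by
        apply Finset.sum_le_sum
        intro n _
        have hln := hlam n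
        have hexp2 : ∀ r : ℝ, (lam n ^ (ρ / 2) * Real.exp (-(τ₂ - r) * lam n) * a n) ^ 2
            = lam n ^ ρ * a n ^ 2 * Real.exp (-(τ₂ - r) * (2 * lam n)) := by
          intro r
          have h1 : (lam n ^ (ρ / 2)) ^ 2 = lam n ^ ρ := by
            rw [← Real.rpow_natCast (lam n ^ (ρ/2)) 2, ← Real.rpow_mul hln.le]
            norm_num
          have h2 : Real.exp (-(τ₂ - r) * lam n) ^ 2
              = Real.exp (-(τ₂ - r) * (2 * lam n)) := by
            rw [← Real.exp_nat_mul]; ring_nf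
          calc (lam n ^ (ρ / 2) * Real.exp (-(τ₂ - r) * lam n) * a n) ^ 2
              = (lam n ^ (ρ/2))^2 * Real.exp (-(τ₂ - r) * lam n) ^ 2 * a n ^ 2 := by ring
            _ = lam n ^ ρ * a n ^ 2 * Real.exp (-(τ₂ - r) * (2 * lam n)) := by
                rw [h1, h2]; ring
        rw [intervalIntegral.integral_congr (fun r _ => hexp2 r),
          intervalIntegral.integral_const_mul, exp_integral _ _ _ hln]
        have hk := key ρ (lam n) (τ₂ - τ₁) hρ0 hρ1 hln (by linarith)
        have ha2 : 0 ≤ a n ^ 2 := sq_nonneg _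
        calc lam n ^ ρ * a n ^ 2 * ((1 - Real.exp (-(τ₂ - τ₁) * (2 * lam n))) / (2 * lam n))
            = a n ^ 2 * (lam n ^ ρ * ((1 - Real.exp (-(τ₂ - τ₁) * (2 * lam n))) / (2 * lam n))) := by
              ring
          _ ≤ a n ^ 2 * (τ₂ - τ₁) ^ (1 - ρ) := mul_le_mul_of_nonneg_left hk ha2
          _ = (τ₂ - τ₁) ^ (1 - ρ) * a n ^ 2 := by ring
    _ = (τ₂ - τ₁) ^ (1 - ρ) * ∑ n, a n ^ 2 := by rw [Finset.mul_sum]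
    _ ≤ (τ₂ - τ₁) ^ (1 - ρ) * ‖x‖ ^ 2 := by
        apply mul_le_mul_of_nonneg_left _ (Real.rpow_nonneg (by linarith) _)
        have := b.orthonormal.sum_inner_products_le x (s := Finset.univ)
        simpa [ha, Real.norm_eq_abs, sq_abs] using this
    _ = 1 * (τ₂ - τ₁) ^ (1 - ρ) * ‖x‖ ^ 2 := by ring
end
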